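/- In the parallel token-dropping process on a directed graph where every vertex has out-degree at most H, each vertex can be active (i.e., occupied and having an outgoing edge to a strictly lower-level empty vertex at the start of a phase) for at most O(H²) phases. -/

import Mathlib

open Finset

universe u1 u2

/-- Out-degree of `v` in the directed edge set `E`. -/
def outdeg {V : Type*} [DecidableEq V] (E : Finset (V × V)) (v : V) : ℕ :=
  (E.filter fun e => e.1 = v).card

/-- A vertex `v` is occupied at phase `τ` if some token resides there. -/
def Occupied {V T : Type*} (pos : ℕ → T → V) (τ : ℕ) (v : V) : Prop :=
  ∃ s, pos τ s = v

/-- A vertex `v` is active at the start of phase `τ` if it is occupied and has an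
outgoing edge to a strictly lower-level empty vertex. -/
def Active {V T : Type*} [DecidableEq V] (level : V → ℕ) (edges : ℕ → Finset (V × V))
    (pos : ℕ → T → V) (τ : ℕ) (v : V) : Prop :=
  Occupied pos τ v ∧ ∃ w, (v, w) ∈ edges τ ∧ level w < level v ∧ ¬ Occupied pos τ w

/-- In the parallel token-dropping process on a directed graph with all out-degrees at
most `H`, each vertex can be active for at most `O(H²)` phases.

The process: at most one token per vertex (`hinj`); edges are only removed over time
(`hshrink`); when a token moves during phase `τ`, it moves along an edge of the current
graph to a strictly lower-level vertex that was empty at the start of the phase, the used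
edge is removed, and the move follows the proposal of its vertex (`hmoves`); proposals go
along current edges, from occupied vertices to strictly lower-level empty vertices
(`hprop`); every active vertex makes a proposal (`hactive`); and every proposal is either
accepted (the proposer's token moves to the target) or the target received another token
during that phase (`haccept`). -/

private lemma exists_switch (P : ℕ → Prop) :
    ∀ b a, a ≤ b → P a → ¬ P b → ∃ σ, a ≤ σ ∧ σ < b ∧ P σ ∧ ¬ P (σ + 1) := by
  intro b
  induction b with
  | zero =>
    intro a ha hPa hPb
    have : a = 0 := Nat.le_zero.mp ha
    exact absurd (this ▸ hPa) hPb
  | succ b ih =>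
    intro a ha hPa hPb
    have hab : a ≤ b := by
      rcases Nat.eq_or_lt_of_le ha with h | h
      · exact absurd (h ▸ hPa) hPb
      · omega
    by_cases hb : P b
    · exact ⟨b, hab, Nat.lt_succ_self b, hb, hPb⟩
    · obtain ⟨σ, h1, h2, h3, h4⟩ := ih a hab hPa hb
      exact ⟨σ, h1, h2.trans (Nat.lt_succ_self b), h3, h4⟩

theorem active_phases_le :
    ∃ C : ℕ, 0 < C ∧
    ∀ (V : Type u1) (T : Type u2) [DecidableEq V] [Fintype T] (H : ℕ)
      (level : V → ℕ) (edges : ℕ → Finset (V × V)) (pos : ℕ → T → V)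
      (prop : ℕ → V → Option V),
      (∀ τ, Function.Injective (pos τ)) →
      (∀ τ w, outdeg (edges τ) w ≤ H) →
      (∀ τ, edges (τ + 1) ⊆ edges τ) →
      (∀ (τ : ℕ) (s : T), pos (τ + 1) s ≠ pos τ s →
        (pos τ s, pos (τ + 1) s) ∈ edges τ ∧ (pos τ s, pos (τ + 1) s) ∉ edges (τ + 1) ∧
          level (pos (τ + 1) s) < level (pos τ s) ∧
          prop τ (pos τ s) = some (pos (τ + 1) s) ∧
          ∀ s'', pos τ s'' ≠ pos (τ + 1) s) →
      (∀ τ u w, prop τ u = some w →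
        (u, w) ∈ edges τ ∧ level w < level u ∧ ¬ Occupied pos τ w ∧ Occupied pos τ u) →
      (∀ τ u, Active level edges pos τ u → (prop τ u).isSome) →
      (∀ τ u w, prop τ u = some w →
        (∃ s, pos τ s = u ∧ pos (τ + 1) s = w) ∨
          (∃ s, pos (τ + 1) s = w ∧ pos τ s ≠ w)) →
      ∀ (v : V) (Ph : Finset ℕ), (∀ τ ∈ Ph, Active level edges pos τ v) →
        Ph.card ≤ C * H ^ 2 := by

  classical
  refine ⟨2, by norm_num, ?_⟩
  intro V T _ _ H level edges pos prop hinj hdeg hshrink hmoves hprop hactive haccept v Ph hPh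
  have hmono : ∀ a b : ℕ, a ≤ b → edges b ⊆ edges a := by
    intro a b hab
    induction b, hab using Nat.le_induction with
    | base => exact fun _ h => h
    | succ b hb ih => exact fun x hx => ih (hshrink b hx)
  set N : Finset V := ((edges 0).filter (fun e => e.1 = v)).image Prod.snd with hN
  have hNcard : N.card ≤ H := le_trans Finset.card_image_le (hdeg 0 v)
  have fiber : ∀ w : V, (Ph.filter (fun τ => prop τ v = some w)).card ≤ H + 1 := by
    intro w
    set S := Ph.filter (fun τ => prop τ v = some w) with hS
    have hSprop : ∀ τ ∈ S, prop τ v = some w := fun τ hτ => (Finset.mem_filter.mp hτ).2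
    have hSempty : ∀ τ ∈ S, ¬ Occupied pos τ w := fun τ hτ =>
      (hprop τ v w (hSprop τ hτ)).2.2.1
    have hSocc : ∀ τ ∈ S, Occupied pos (τ + 1) w := by
      intro τ hτ
      rcases haccept τ v w (hSprop τ hτ) with ⟨s, _, h2⟩ | ⟨s, h2, _⟩
      exacts [⟨s, h2⟩, ⟨s, h2⟩]
    rcases S.eq_empty_or_nonempty with he | hne
    · simp [he]
    set M := S.max' hne with hM
    have hMS : M ∈ S := S.max'_mem hne
    have hex : ∀ τ ∈ S, ∀ τ' ∈ S, τ < τ' →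
        ∃ σ, τ + 1 ≤ σ ∧ σ < τ' ∧ Occupied pos σ w ∧ ¬ Occupied pos (σ + 1) w := by
      intro τ hτ τ' hτ' hlt
      exact exists_switch (fun σ => Occupied pos σ w) τ' (τ + 1) hlt (hSocc τ hτ)
        (hSempty τ' hτ')
    have hexQ : ∀ τ ∈ S, τ ≠ M →
        ∃ σ, τ + 1 ≤ σ ∧ Occupied pos σ w ∧ ¬ Occupied pos (σ + 1) w := by
      intro τ hτ hne'
      have hlt : τ < M := lt_of_le_of_ne (S.le_max' τ hτ) hne'
      obtain ⟨σ, h1, _, h3, h4⟩ := hex τ hτ M hMS hlt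
      exact ⟨σ, h1, h3, h4⟩
    set f : ℕ → V × V := fun τ =>
      if h : ∃ σ, τ + 1 ≤ σ ∧ Occupied pos σ w ∧ ¬ Occupied pos (σ + 1) w then
        (w, pos (Nat.find h + 1) (Classical.choose (Nat.find_spec h).2.1))
      else (w, w) with hf
    have hfkey : ∀ τ ∈ S.erase M, ∃ σ, τ + 1 ≤ σ ∧
        f τ ∈ edges σ ∧ f τ ∉ edges (σ + 1) ∧ (f τ).1 = w ∧
        ∀ τ' ∈ S, τ < τ' → σ < τ' := by
      intro τ hτ
      obtain ⟨hne', hτS⟩ := Finset.mem_erase.mp hτ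
      have h : ∃ σ, τ + 1 ≤ σ ∧ Occupied pos σ w ∧ ¬ Occupied pos (σ + 1) w :=
        hexQ τ hτS hne'
      have hspec := Nat.find_spec h
      set σ := Nat.find h with hσ
      set s := Classical.choose hspec.2.1 with hs
      have hs1 : pos σ s = w := Classical.choose_spec hspec.2.1
      have hs2 : pos (σ + 1) s ≠ pos σ s := by
        rw [hs1]; intro hc; exact hspec.2.2 ⟨s, hc⟩
      have hm := hmoves σ s hs2
      have hfτ : f τ = (w, pos (σ + 1) s) := by
        rw [hf]; simp only [dif_pos h]; rfl
      rw [hs1] at hm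
      refine ⟨σ, hspec.1, ?_, ?_, ?_, ?_⟩
      · rw [hfτ]; exact hm.1
      · rw [hfτ]; exact hm.2.1
      · rw [hfτ]
      · intro τ' hτ' hlt
        obtain ⟨σ', ha', hb', hc', hd'⟩ := hex τ hτS τ' hτ' hlt
        have : σ ≤ σ' := Nat.find_min' h ⟨ha', hc', hd'⟩
        omega
    have hinjf : ∀ τ₁ ∈ S.erase M, ∀ τ₂ ∈ S.erase M, τ₁ < τ₂ → f τ₁ ≠ f τ₂ := by
      intro τ₁ h1 τ₂ h2 hlt
      obtain ⟨σ₁, ha1, hb1, hc1, _, hd1⟩ := hfkey τ₁ h1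
      obtain ⟨σ₂, ha2, hb2, _, _, _⟩ := hfkey τ₂ h2
      have hσlt : σ₁ < τ₂ := hd1 τ₂ (Finset.mem_of_mem_erase h2) hlt
      have hle : σ₁ + 1 ≤ σ₂ := by omega
      intro hcontra
      exact hc1 (hcontra ▸ hmono (σ₁ + 1) σ₂ hle hb2)
    have hcard' : (S.erase M).card ≤ ((edges 0).filter (fun e => e.1 = w)).card := by
      apply Finset.card_le_card_of_injOn f
      · intro τ hτ
        obtain ⟨σ, _, hb, _, hfst, _⟩ := hfkey τ hτ
        exact Finset.mem_filter.mpr ⟨hmono 0 σ (Nat.zero_le σ) hb, hfst⟩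
      · intro τ₁ h1 τ₂ h2 heq
        by_contra hne'
        rcases lt_or_gt_of_ne hne' with h | h
        · exact hinjf τ₁ (Finset.mem_coe.mp h1) τ₂ (Finset.mem_coe.mp h2) h heq
        · exact hinjf τ₂ (Finset.mem_coe.mp h2) τ₁ (Finset.mem_coe.mp h1) h heq.symm
    have hH : (S.erase M).card ≤ H := hcard'.trans (hdeg 0 w)
    have := Finset.card_erase_add_one hMS
    omega
  have hsub : Ph ⊆ N.biUnion (fun w => Ph.filter (fun τ => prop τ v = some w)) := by
    intro τ hτ
    obtain ⟨w, hw⟩ := Option.isSome_iff_exists.mp (hactive τ v (hPh τ hτ))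
    have hedge : (v, w) ∈ edges τ := (hprop τ v w hw).1
    refine Finset.mem_biUnion.mpr ⟨w, ?_, Finset.mem_filter.mpr ⟨hτ, hw⟩⟩
    exact Finset.mem_image.mpr ⟨(v, w),
      Finset.mem_filter.mpr ⟨hmono 0 τ (Nat.zero_le τ) hedge, rfl⟩, rfl⟩
  calc Ph.card ≤ (N.biUnion (fun w => Ph.filter (fun τ => prop τ v = some w))).card :=
        Finset.card_le_card hsub
    _ ≤ ∑ w ∈ N, (Ph.filter (fun τ => prop τ v = some w)).card := Finset.card_biUnion_le
    _ ≤ N.card • (H + 1) := Finset.sum_le_card_nsmul N _ (H + 1) (fun w _ => fiber w)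
    _ = N.card * (H + 1) := by rw [smul_eq_mul]
    _ ≤ H * (H + 1) := Nat.mul_le_mul_right _ hNcard
    _ ≤ 2 * H ^ 2 := by nlinarith [Nat.le_self_pow (two_ne_zero) H]
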